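/- Let H and H' be complex Hilbert spaces, let S be a densely defined closed linear operator from H to H' with Hilbert adjoint S†, and let A = S† ∘ S be the composition with domain {f ∈ dom(S) : Sf ∈ dom(S†)}. Suppose there is a constant C > 0 such that for every u ∈ dom(S) there exists f ∈ dom(S) orthogonal to ker(S) with Sf = Su and ‖f‖ ≤ C‖Sf‖. Then the range of A is a closed subspace of H, and for every φ in the range of A there exists a unique f ∈ dom(A) orthogonal to ker(S) with Af = φ; moreover this f satisfies ‖f‖ ≤ C²‖φ‖. -/
import Mathlib


open scoped ComplexInnerProductSpace

private lemma cauchySeq_of_dominated' {H H' : Type*} [NormedAddCommGroup H]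
    [NormedAddCommGroup H'] {u : ℕ → H} {v : ℕ → H'} {K : ℝ} (hK : 0 < K) (hv : CauchySeq v)
    (h : ∀ n m, ‖u n - u m‖ ≤ K * ‖v n - v m‖) : CauchySeq u := by
  rw [Metric.cauchySeq_iff] at hv ⊢
  intro ε hε
  obtain ⟨N, hN⟩ := hv (ε / K) (by positivity)
  refine ⟨N, fun n hn m hm => ?_⟩
  have h1 := hN n hn m hm
  rw [dist_eq_norm] at h1 ⊢
  calc ‖u n - u m‖ ≤ K * ‖v n - v m‖ := h n m
    _ < K * (ε / K) := mul_lt_mul_of_pos_left h1 hK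
    _ = ε := by field_simp

/-- **Closed range and unique solvability for `A = S† ∘ S`.**
Let `S` be a densely defined closed operator between complex Hilbert spaces and let
`A = S† ∘ S` with domain `{f ∈ dom S : S f ∈ dom S†}`.  If there is `C > 0` such that for
every `u ∈ dom S` there is `f ∈ dom S` orthogonal to `ker S` with `S f = S u` and
`‖f‖ ≤ C‖S f‖`, then the range of `A` is closed, and for every `φ` in the range of `A`
there is a unique `f ∈ dom A` orthogonal to `ker S` with `A f = φ`; moreover
`‖f‖ ≤ C²‖φ‖`. -/
theorem stmt1 {H H' : Type*} [NormedAddCommGroup H] [InnerProductSpace ℂ H] [CompleteSpace H]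
    [NormedAddCommGroup H'] [InnerProductSpace ℂ H'] [CompleteSpace H']
    (S : H →ₗ.[ℂ] H') (hdense : Dense (S.domain : Set H)) (hclosed : S.IsClosed)
    (C : ℝ) (hC : 0 < C)
    (hsolve : ∀ (u : H) (hu : u ∈ S.domain), ∃ (f : H) (hf : f ∈ S.domain),
      (∀ (g : H) (hg : g ∈ S.domain), S ⟨g, hg⟩ = 0 → ⟪f, g⟫ = 0) ∧
      S ⟨f, hf⟩ = S ⟨u, hu⟩ ∧ ‖f‖ ≤ C * ‖S ⟨f, hf⟩‖) :
    IsClosed {φ : H | ∃ (f : H) (hf : f ∈ S.domain) (hSf : S ⟨f, hf⟩ ∈ S.adjoint.domain),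
        S.adjoint ⟨S ⟨f, hf⟩, hSf⟩ = φ} ∧
    ∀ φ ∈ {φ : H | ∃ (f : H) (hf : f ∈ S.domain) (hSf : S ⟨f, hf⟩ ∈ S.adjoint.domain),
        S.adjoint ⟨S ⟨f, hf⟩, hSf⟩ = φ},
      (∃! f : H, ∃ (hf : f ∈ S.domain) (hSf : S ⟨f, hf⟩ ∈ S.adjoint.domain),
        (∀ (g : H) (hg : g ∈ S.domain), S ⟨g, hg⟩ = 0 → ⟪f, g⟫ = 0) ∧
        S.adjoint ⟨S ⟨f, hf⟩, hSf⟩ = φ) ∧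
      (∀ f : H, (∃ (hf : f ∈ S.domain) (hSf : S ⟨f, hf⟩ ∈ S.adjoint.domain),
        (∀ (g : H) (hg : g ∈ S.domain), S ⟨g, hg⟩ = 0 → ⟪f, g⟫ = 0) ∧
        S.adjoint ⟨S ⟨f, hf⟩, hSf⟩ = φ) → ‖f‖ ≤ C ^ 2 * ‖φ‖) := by
  have formal := S.adjoint_isFormalAdjoint hdense
  -- Step 1: the a priori estimate holds for every `f ⊥ ker S` in `dom S`.
  have est : ∀ (f : H) (hf : f ∈ S.domain),
      (∀ (g : H) (hg : g ∈ S.domain), S ⟨g, hg⟩ = 0 → ⟪f, g⟫ = 0) →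
      ‖f‖ ≤ C * ‖S ⟨f, hf⟩‖ := by
    intro f hf horth
    obtain ⟨f', hf', horth', hSeq, hnorm⟩ := hsolve f hf
    have hd : f' - f ∈ S.domain := sub_mem hf' hf
    have hSd : S ⟨f' - f, hd⟩ = 0 := by
      have h0 : (⟨f' - f, hd⟩ : S.domain) = ⟨f', hf'⟩ - ⟨f, hf⟩ := rfl
      rw [h0, S.map_sub, hSeq, sub_self]
    have h1 : ⟪f', f' - f⟫ = 0 := horth' _ hd hSd
    have h2 : ⟪f, f' - f⟫ = 0 := horth _ hd hSd
    have h3 : f' - f = 0 := by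
      have : ⟪f' - f, f' - f⟫ = (0 : ℂ) := by rw [inner_sub_left, h1, h2, sub_zero]
      exact inner_self_eq_zero.mp this
    have hff : f' = f := sub_eq_zero.mp h3
    subst hff
    exact hnorm
  -- Step 2: key identity `⟪A f, f⟫ = ‖S f‖²` and resulting estimates for solutions.
  have keyinner : ∀ (f : H) (hf : f ∈ S.domain) (hSf : S ⟨f, hf⟩ ∈ S.adjoint.domain),
      ⟪S.adjoint ⟨S ⟨f, hf⟩, hSf⟩, f⟫ = ⟪S ⟨f, hf⟩, S ⟨f, hf⟩⟫ :=
    fun f hf hSf => formal ⟨S ⟨f, hf⟩, hSf⟩ ⟨f, hf⟩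
  have sol_est : ∀ (f : H) (hf : f ∈ S.domain) (hSf : S ⟨f, hf⟩ ∈ S.adjoint.domain),
      (∀ (g : H) (hg : g ∈ S.domain), S ⟨g, hg⟩ = 0 → ⟪f, g⟫ = 0) →
      ‖S ⟨f, hf⟩‖ ≤ C * ‖S.adjoint ⟨S ⟨f, hf⟩, hSf⟩‖ ∧
      ‖f‖ ≤ C ^ 2 * ‖S.adjoint ⟨S ⟨f, hf⟩, hSf⟩‖ := by
    intro f hf hSf horth
    set φ := S.adjoint ⟨S ⟨f, hf⟩, hSf⟩ with hφdef
    have hfn : ‖f‖ ≤ C * ‖S ⟨f, hf⟩‖ := est f hf horth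
    have hsq : ‖S ⟨f, hf⟩‖ ^ 2 ≤ ‖φ‖ * ‖f‖ := by
      have h1 : (‖S ⟨f, hf⟩‖ : ℂ) ^ 2 = ⟪φ, f⟫ := by
        rw [keyinner f hf hSf, inner_self_eq_norm_sq_to_K]
        norm_cast
      have h2 : ‖S ⟨f, hf⟩‖ ^ 2 = ‖⟪φ, f⟫‖ := by
        rw [← h1]
        simp [norm_pow]
      rw [h2]
      exact norm_inner_le_norm φ f
    have hS : ‖S ⟨f, hf⟩‖ ≤ C * ‖φ‖ := by
      nlinarith [norm_nonneg φ, norm_nonneg f, norm_nonneg (S ⟨f, hf⟩),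
        mul_le_mul_of_nonneg_left hfn (norm_nonneg φ), mul_nonneg hC.le (norm_nonneg φ)]
    refine ⟨hS, ?_⟩
    calc ‖f‖ ≤ C * ‖S ⟨f, hf⟩‖ := hfn
      _ ≤ C * (C * ‖φ‖) := by
          exact mul_le_mul_of_nonneg_left hS hC.le
      _ = C ^ 2 * ‖φ‖ := by ring
  -- Step 3: the difference of two orthogonal solutions is an orthogonal solution.
  have diff_sol : ∀ (f1 : H) (hf1 : f1 ∈ S.domain) (hSf1 : S ⟨f1, hf1⟩ ∈ S.adjoint.domain)
      (f2 : H) (hf2 : f2 ∈ S.domain) (hSf2 : S ⟨f2, hf2⟩ ∈ S.adjoint.domain),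
      ∃ (hd : f1 - f2 ∈ S.domain) (hSd : S ⟨f1 - f2, hd⟩ ∈ S.adjoint.domain),
        S ⟨f1 - f2, hd⟩ = S ⟨f1, hf1⟩ - S ⟨f2, hf2⟩ ∧
        S.adjoint ⟨S ⟨f1 - f2, hd⟩, hSd⟩ =
          S.adjoint ⟨S ⟨f1, hf1⟩, hSf1⟩ - S.adjoint ⟨S ⟨f2, hf2⟩, hSf2⟩ := by
    intro f1 hf1 hSf1 f2 hf2 hSf2
    have hd : f1 - f2 ∈ S.domain := sub_mem hf1 hf2
    have hseq : S ⟨f1 - f2, hd⟩ = S ⟨f1, hf1⟩ - S ⟨f2, hf2⟩ := by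
      have h0 : (⟨f1 - f2, hd⟩ : S.domain) = ⟨f1, hf1⟩ - ⟨f2, hf2⟩ := rfl
      rw [h0, S.map_sub]
    have hSd : S ⟨f1 - f2, hd⟩ ∈ S.adjoint.domain := by
      rw [hseq]; exact sub_mem hSf1 hSf2
    refine ⟨hd, hSd, hseq, ?_⟩
    have h1 : (⟨S ⟨f1 - f2, hd⟩, hSd⟩ : S.adjoint.domain) =
        ⟨S ⟨f1, hf1⟩, hSf1⟩ - ⟨S ⟨f2, hf2⟩, hSf2⟩ := Subtype.ext hseq
    rw [h1, S.adjoint.map_sub]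
  -- Existence of an orthogonal solution for each `φ` in the range.
  have exist : ∀ φ ∈ {φ : H | ∃ (f : H) (hf : f ∈ S.domain)
        (hSf : S ⟨f, hf⟩ ∈ S.adjoint.domain), S.adjoint ⟨S ⟨f, hf⟩, hSf⟩ = φ},
      ∃ (f : H) (hf : f ∈ S.domain) (hSf : S ⟨f, hf⟩ ∈ S.adjoint.domain),
        (∀ (g : H) (hg : g ∈ S.domain), S ⟨g, hg⟩ = 0 → ⟪f, g⟫ = 0) ∧
        S.adjoint ⟨S ⟨f, hf⟩, hSf⟩ = φ := by
    rintro φ ⟨u, hu, hSu, hAu⟩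
    obtain ⟨f, hf, horth, hSeq, -⟩ := hsolve u hu
    have hSf : S ⟨f, hf⟩ ∈ S.adjoint.domain := by rw [hSeq]; exact hSu
    refine ⟨f, hf, hSf, horth, ?_⟩
    have h1 : (⟨S ⟨f, hf⟩, hSf⟩ : S.adjoint.domain) = ⟨S ⟨u, hu⟩, hSu⟩ := Subtype.ext hSeq
    rw [h1, hAu]
  -- Uniqueness of orthogonal solutions.
  have uniq : ∀ (φ : H) (f1 : H) (hf1 : f1 ∈ S.domain) (hSf1 : S ⟨f1, hf1⟩ ∈ S.adjoint.domain)
      (f2 : H) (hf2 : f2 ∈ S.domain) (hSf2 : S ⟨f2, hf2⟩ ∈ S.adjoint.domain),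
      (∀ (g : H) (hg : g ∈ S.domain), S ⟨g, hg⟩ = 0 → ⟪f1, g⟫ = 0) →
      (∀ (g : H) (hg : g ∈ S.domain), S ⟨g, hg⟩ = 0 → ⟪f2, g⟫ = 0) →
      S.adjoint ⟨S ⟨f1, hf1⟩, hSf1⟩ = φ → S.adjoint ⟨S ⟨f2, hf2⟩, hSf2⟩ = φ → f1 = f2 := by
    intro φ f1 hf1 hSf1 f2 hf2 hSf2 horth1 horth2 hA1 hA2
    obtain ⟨hd, hSd, hseq, hAd⟩ := diff_sol f1 hf1 hSf1 f2 hf2 hSf2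
    have horthd : ∀ (g : H) (hg : g ∈ S.domain), S ⟨g, hg⟩ = 0 → ⟪f1 - f2, g⟫ = 0 := by
      intro g hg hSg
      rw [inner_sub_left, horth1 g hg hSg, horth2 g hg hSg, sub_zero]
    have hzero : S.adjoint ⟨S ⟨f1 - f2, hd⟩, hSd⟩ = 0 := by
      rw [hAd, hA1, hA2, sub_self]
    have := (sol_est (f1 - f2) hd hSd horthd).2
    rw [hzero, norm_zero, mul_zero] at this
    have : f1 - f2 = 0 := norm_le_zero_iff.mp this
    exact sub_eq_zero.mp this
  constructor
  · -- Closedness of the range of `A`.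
    apply IsSeqClosed.isClosed
    intro ψ φ hmem hψ
    choose f hf hSf horth hAf using fun n => exist (ψ n) (hmem n)
    have hψc : CauchySeq ψ := hψ.cauchySeq
    -- difference estimates
    have hdiff : ∀ n m : ℕ, ‖f n - f m‖ ≤ C ^ 2 * ‖ψ n - ψ m‖ ∧
        ‖S ⟨f n, hf n⟩ - S ⟨f m, hf m⟩‖ ≤ C * ‖ψ n - ψ m‖ := by
      intro n m
      obtain ⟨hd, hSd, hseq, hAd⟩ := diff_sol (f n) (hf n) (hSf n) (f m) (hf m) (hSf m)
      have horthd : ∀ (g : H) (hg : g ∈ S.domain), S ⟨g, hg⟩ = 0 → ⟪f n - f m, g⟫ = 0 := by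
        intro g hg hSg
        rw [inner_sub_left, horth n g hg hSg, horth m g hg hSg, sub_zero]
      have hval : S.adjoint ⟨S ⟨f n - f m, hd⟩, hSd⟩ = ψ n - ψ m := by
        rw [hAd, hAf n, hAf m]
      obtain ⟨e1, e2⟩ := sol_est (f n - f m) hd hSd horthd
      rw [hval] at e1 e2
      rw [hseq] at e1
      exact ⟨e2, e1⟩
    have hfc : CauchySeq f :=
      cauchySeq_of_dominated' (by positivity) hψc fun n m => (hdiff n m).1
    have hSc : CauchySeq (fun n => S ⟨f n, hf n⟩) :=
      cauchySeq_of_dominated' hC hψc fun n m => (hdiff n m).2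
    obtain ⟨x, hx⟩ := cauchySeq_tendsto_of_complete hfc
    obtain ⟨g, hg⟩ := cauchySeq_tendsto_of_complete hSc
    -- closedness of `S` gives `x ∈ dom S` and `S x = g`
    have hgraph : (x, g) ∈ (S.graph : Set (H × H')) := by
      refine hclosed.mem_of_tendsto (hx.prodMk_nhds hg)
        (Filter.Eventually.of_forall fun n => ?_)
      exact S.mem_graph ⟨f n, hf n⟩
    obtain ⟨y, hy1, hy2⟩ := S.mem_graph_iff.mp hgraph
    have hxd : x ∈ S.domain := by have h := y.2; rwa [hy1] at h
    have hSx : S ⟨x, hxd⟩ = g := by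
      have : (⟨x, hxd⟩ : S.domain) = y := Subtype.ext hy1.symm
      rw [this]; exact hy2
    -- `g` lies in the adjoint domain with `S† g = φ`
    have hid : ∀ v : S.domain, ⟪φ, (v : H)⟫ = ⟪g, S v⟫ := by
      intro v
      have hn : ∀ n : ℕ, ⟪ψ n, (v : H)⟫ = ⟪S ⟨f n, hf n⟩, S v⟫ := by
        intro n
        have := formal ⟨S ⟨f n, hf n⟩, hSf n⟩ v
        rw [hAf n] at this
        exact this
      have t1 : Filter.Tendsto (fun n => ⟪ψ n, (v : H)⟫) Filter.atTop (nhds ⟪φ, (v : H)⟫) :=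
        hψ.inner tendsto_const_nhds
      have t2 : Filter.Tendsto (fun n => ⟪S ⟨f n, hf n⟩, S v⟫) Filter.atTop
          (nhds ⟪g, S v⟫) := hg.inner tendsto_const_nhds
      have : Filter.Tendsto (fun n => ⟪ψ n, (v : H)⟫) Filter.atTop (nhds ⟪g, S v⟫) := by
        simpa only [hn] using t2
      exact tendsto_nhds_unique t1 this
    have hgmem : g ∈ S.adjoint.domain :=
      LinearPMap.mem_adjoint_domain_of_exists _ ⟨φ, hid⟩
    have hval : S.adjoint ⟨g, hgmem⟩ = φ :=
      LinearPMap.adjoint_apply_eq hdense ⟨g, hgmem⟩ fun v => hid v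
    have hSxmem : S ⟨x, hxd⟩ ∈ S.adjoint.domain := by rw [hSx]; exact hgmem
    refine ⟨x, hxd, hSxmem, ?_⟩
    have h1 : (⟨S ⟨x, hxd⟩, hSxmem⟩ : S.adjoint.domain) = ⟨g, hgmem⟩ := Subtype.ext hSx
    rw [h1, hval]
  · -- Unique solvability with the norm estimate.
    intro φ hφ
    obtain ⟨f, hf, hSf, horth, hAf⟩ := exist φ hφ
    constructor
    · refine ⟨f, ⟨hf, hSf, horth, hAf⟩, ?_⟩
      rintro f2 ⟨hf2, hSf2, horth2, hAf2⟩
      exact uniq φ f2 hf2 hSf2 f hf hSf horth2 horth hAf2 hAf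
    · rintro f2 ⟨hf2, hSf2, horth2, hAf2⟩
      have := (sol_est f2 hf2 hSf2 horth2).2
      rwa [hAf2] at this
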